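/- For every real y with 0 ≤ y ≤ 3/4, one has 2 y F(y) ≤ 1; equivalently, since F′(y) = 1 − 2 y F(y), the Dawson function F is nondecreasing on the interval [0, 3/4]. -/

import Mathlib

/-- The Dawson function `F(x) = e^{−x²} ∫₀ˣ e^{t²} dt`. -/
noncomputable def dawson (x : ℝ) : ℝ := Real.exp (-x ^ 2) * ∫ t in (0 : ℝ)..x, Real.exp (t ^ 2)


lemma exp_sq_cont : Continuous fun t : ℝ => Real.exp (t ^ 2) := by continuity

lemma dawson_hasDerivAt (x : ℝ) : HasDerivAt dawson (1 - 2 * x * dawson x) x := by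
  have hG : HasDerivAt (fun u : ℝ => ∫ t in (0:ℝ)..u, Real.exp (t ^ 2)) (Real.exp (x ^ 2)) x :=
    (exp_sq_cont.integral_hasStrictDerivAt 0 x).hasDerivAt
  have hE : HasDerivAt (fun u : ℝ => Real.exp (-u ^ 2)) (Real.exp (-x ^ 2) * (-(2 * x))) x := by
    have h1 : HasDerivAt (fun u : ℝ => -u ^ 2) (-(2 * x)) x := by
      simpa using ((hasDerivAt_pow 2 x).fun_neg)
    simpa using h1.exp
  have := hE.mul hG
  refine this.congr_deriv ?_
  have : Real.exp (-x ^ 2) * Real.exp (x ^ 2) = 1 := by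
    rw [← Real.exp_add]; simp
  unfold dawson
  ring_nf
  nlinarith [this]

lemma dawson_bound (y : ℝ) (h0 : 0 ≤ y) (h1 : y ≤ 3 / 4) : 2 * y * dawson y ≤ 1 := by
  have hint1 : IntervalIntegrable (fun t : ℝ => Real.exp (t ^ 2)) MeasureTheory.volume 0 y :=
    exp_sq_cont.intervalIntegrable 0 y
  have hint2 : IntervalIntegrable (fun t : ℝ => 1 + t ^ 2 * Real.exp (y ^ 2))
      MeasureTheory.volume 0 y := by
    apply Continuous.intervalIntegrable; continuity
  have hb : ∀ t ∈ Set.Icc (0:ℝ) y, Real.exp (t ^ 2) ≤ 1 + t ^ 2 * Real.exp (y ^ 2) := by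
    intro t ht
    have h2 : Real.exp (-(t ^ 2)) ≥ 1 - t ^ 2 := by
      have := Real.add_one_le_exp (-(t ^ 2)); linarith
    have h3 : Real.exp (-(t ^ 2)) * Real.exp (t ^ 2) = 1 := by
      rw [← Real.exp_add]; simp
    have h4 : Real.exp (t ^ 2) ≤ Real.exp (y ^ 2) := by
      apply Real.exp_le_exp.2
      have := ht.1; have := ht.2
      nlinarith
    nlinarith [Real.exp_pos (t ^ 2), Real.exp_pos (y ^ 2), sq_nonneg t]
  have hI : (∫ t in (0:ℝ)..y, Real.exp (t ^ 2)) ≤ ∫ t in (0:ℝ)..y, (1 + t ^ 2 * Real.exp (y ^ 2)) :=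
    intervalIntegral.integral_mono_on h0 hint1 hint2 hb
  have hcalc : (∫ t in (0:ℝ)..y, (1 + t ^ 2 * Real.exp (y ^ 2))) = y + y ^ 3 / 3 * Real.exp (y ^ 2) := by
    rw [intervalIntegral.integral_add (by apply Continuous.intervalIntegrable; continuity)
      (by apply Continuous.intervalIntegrable; continuity)]
    rw [intervalIntegral.integral_const, intervalIntegral.integral_mul_const,
      integral_pow]
    simp [smul_eq_mul]; ring
  have hIpos : (0:ℝ) ≤ ∫ t in (0:ℝ)..y, Real.exp (t ^ 2) := by
    apply intervalIntegral.integral_nonneg h0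
    intro t _; positivity
  have hEneg : Real.exp (-y ^ 2) ≤ 1 / (1 + y ^ 2) := by
    have h5 : 1 + y ^ 2 ≤ Real.exp (y ^ 2) := by
      have := Real.add_one_le_exp (y ^ 2); linarith
    have h6 : Real.exp (-y ^ 2) * Real.exp (y ^ 2) = 1 := by rw [← Real.exp_add]; simp
    have hp : (0:ℝ) < 1 + y ^ 2 := by positivity
    rw [le_div_iff₀ hp]
    nlinarith [Real.exp_pos (-y ^ 2)]
  have h6 : Real.exp (-y ^ 2) * Real.exp (y ^ 2) = 1 := by rw [← Real.exp_add]; simp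
  unfold dawson
  have step : 2 * y * (Real.exp (-y ^ 2) * ∫ t in (0:ℝ)..y, Real.exp (t ^ 2))
      ≤ 2 * y * (Real.exp (-y ^ 2) * (y + y ^ 3 / 3 * Real.exp (y ^ 2))) := by
    have := hI.trans_eq hcalc
    have hpos : 0 ≤ 2 * y * Real.exp (-y ^ 2) := by positivity
    nlinarith [Real.exp_pos (-y ^ 2)]
  refine step.trans ?_
  have expand : 2 * y * (Real.exp (-y ^ 2) * (y + y ^ 3 / 3 * Real.exp (y ^ 2)))
      = 2 * y ^ 2 * Real.exp (-y ^ 2) + 2 * y ^ 4 / 3 := by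
    linear_combination (2 * y ^ 4 / 3) * h6
  rw [expand]
  have hp : (0:ℝ) < 1 + y ^ 2 := by positivity
  have hy2 : y ^ 2 ≤ 9 / 16 := by nlinarith
  have key : 2 * y ^ 2 * (1 / (1 + y ^ 2)) + 2 * y ^ 4 / 3 ≤ 1 := by
    rw [← sub_nonneg]
    have h9 : 1 - (2 * y ^ 2 * (1 / (1 + y ^ 2)) + 2 * y ^ 4 / 3)
        = (3 * (1 + y ^ 2) - 6 * y ^ 2 - 2 * y ^ 4 * (1 + y ^ 2)) / (3 * (1 + y ^ 2)) := by
      field_simp; ring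
    rw [h9]
    apply div_nonneg _ (by positivity)
    nlinarith [hy2, sq_nonneg y, mul_nonneg (sq_nonneg y) (sq_nonneg y)]
  have h10 : 2 * y ^ 2 * Real.exp (-y ^ 2) ≤ 2 * y ^ 2 * (1 / (1 + y ^ 2)) :=
    mul_le_mul_of_nonneg_left hEneg (by positivity)
  linarith

/-- for `0 ≤ y ≤ 3/4` one has `2 y F(y) ≤ 1`; equivalently, the Dawson
function is nondecreasing on `[0, 3/4]`. -/
theorem dawson_monotone_on_initial_interval :
    (∀ y : ℝ, 0 ≤ y → y ≤ 3 / 4 → 2 * y * dawson y ≤ 1) ∧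
      MonotoneOn dawson (Set.Icc (0 : ℝ) (3 / 4)) := by
  refine ⟨fun y h0 h1 => dawson_bound y h0 h1, ?_⟩
  have hdiff : ∀ x : ℝ, DifferentiableAt ℝ dawson x := fun x => (dawson_hasDerivAt x).differentiableAt
  apply monotoneOn_of_deriv_nonneg (convex_Icc 0 (3/4))
  · exact fun x _ => (hdiff x).continuousAt.continuousWithinAt
  · intro x hx
    exact (hdiff x).differentiableWithinAt
  · intro x hx
    rw [interior_Icc] at hx
    rw [(dawson_hasDerivAt x).deriv]
    have := dawson_bound x hx.1.le hx.2.le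
    linarith
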